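/- Consider a birth-death chain on {0,...,n} (n even) with backward biases γ_k ≤ (1/r)·(n−1)/(n−k) for 1 ≤ k ≤ ⌈n/2⌉ and γ_k = (1/r)·(n−1)/k for ⌈n/2⌉+1 ≤ k ≤ n−1, where r > 2. Then the absorption-at-n probability from state 1 is at least [ (1−(1/r)^{log n})/(1−1/r)·(1+o(1)) + (2/r)^{log n}·(1−(2/r)^{n−log n})/(1−2/r) ]^{−1}, which tends to 1 − 1/r as n → ∞. -/

import Mathlib

open Filter Finset Topology

private lemma geom_bound {x : ℝ} (h0 : 0 ≤ x) (h1 : x < 1) (n : ℕ) :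
    ∑ i ∈ Finset.range n, x ^ i ≤ (1 - x)⁻¹ := by
  rw [geom_sum_eq (by linarith : x ≠ 1)]
  rw [show (x ^ n - 1) / (x - 1) = (1 - x ^ n) / (1 - x) by
    rw [div_eq_div_iff (by linarith) (by linarith)]; ring]
  rw [← one_div]
  gcongr
  · linarith [pow_nonneg h0 n]

private lemma arith_final {r ε Sm : ℝ} (hr : 2 < r) (hε : 0 < ε) (hS0 : 0 ≤ Sm)
    (hSlt : Sm < 1 / (r - 1) + ε) : 1 - 1 / r - ε ≤ 1 / (1 + Sm) := by
  have hr0 : (0:ℝ) < r := by linarith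
  have hr1 : (0:ℝ) < r - 1 := by linarith
  have hD : (0:ℝ) < 1 + Sm := by linarith
  rcases le_or_gt (1 - 1 / r - ε) 0 with hneg | hpos
  · have : (0:ℝ) < 1 / (1 + Sm) := by positivity
    linarith
  · rw [le_div_iff₀ hD]
    have huv : 1 / (r - 1) - 1 / r = (1 / r) * (1 / (r - 1)) := by
      field_simp; ring
    have h1 : (1 - 1/r - ε) * (1 + Sm) ≤ (1 - 1/r - ε) * (1 + 1/(r-1) + ε) :=
      mul_le_mul_of_nonneg_left (by linarith) hpos.le
    have h2 : (1 - 1/r - ε) * (1 + 1/(r-1) + ε) ≤ 1 := by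
      have hu : (0:ℝ) < 1/r := by positivity
      have hv : (0:ℝ) < 1/(r-1) := by positivity
      nlinarith
    linarith

theorem cycle_vs_clique_lower_bound
    (r : ℝ) (hr : 2 < r)
    (γ : ℕ → ℕ → ℝ)
    (hγpos : ∀ m k, 1 ≤ k → k ≤ 2 * m - 1 → 0 < γ m k)
    (hγ1 : ∀ m k, 1 ≤ k → k ≤ m →
      γ m k ≤ (1 / r) * ((2 * m : ℝ) - 1) / ((2 * m : ℝ) - k))
    (hγ2 : ∀ m k, m + 1 ≤ k → k ≤ 2 * m - 1 →
      γ m k = (1 / r) * ((2 * m : ℝ) - 1) / (k : ℝ))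
    (f : ℕ → ℝ)
    (hf : ∀ m, f m =
      1 / (1 + ∑ j ∈ Finset.Icc 1 (2 * m - 1), ∏ k ∈ Finset.Icc 1 j, γ m k)) :
    atTop.liminf f ≥ 1 - 1 / r := by
  have hr0 : (0:ℝ) < r := by linarith
  have hr1 : (0:ℝ) < r - 1 := by linarith
  have hr2 : (0:ℝ) < r - 2 := by linarith
  have hSnn : ∀ m, 0 ≤ ∑ j ∈ Finset.Icc 1 (2 * m - 1), ∏ k ∈ Finset.Icc 1 j, γ m k := by
    intro m
    apply Finset.sum_nonneg
    intro j hj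
    apply Finset.prod_nonneg
    intro k hk
    simp only [Finset.mem_Icc] at hj hk
    exact (hγpos m k hk.1 (hk.2.trans hj.2)).le
  have hfle1 : ∀ m, f m ≤ 1 := by
    intro m
    rw [hf m, div_le_one (by linarith [hSnn m])]
    linarith [hSnn m]
  -- key eventual bound
  have key : ∀ ε : ℝ, 0 < ε → ∀ᶠ m in atTop, 1 - 1 / r - ε ≤ f m := by
    intro ε hε
    have hx0 : (0:ℝ) ≤ 1 / r := by positivity
    have hx1 : 1 / r < 1 := by rw [div_lt_one hr0]; linarith
    have hy0 : (0:ℝ) ≤ 2 / r := by positivity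
    have hy1 : 2 / r < 1 := by rw [div_lt_one hr0]; linarith
    -- choose K
    obtain ⟨K, hK1, hKsmall⟩ : ∃ K : ℕ, 1 ≤ K ∧ (1 / r) ^ K * (2 / (r - 2)) < ε / 2 := by
      have htend : Tendsto (fun K : ℕ => (1 / r) ^ K * (2 / (r - 2))) atTop (𝓝 0) := by
        simpa using (tendsto_pow_atTop_nhds_zero_of_lt_one hx0 hx1).mul_const (2 / (r - 2))
      obtain ⟨K, h1, h2⟩ :=
        ((htend.eventually_lt_const (by positivity : (0:ℝ) < ε / 2)).and
          (eventually_ge_atTop 1)).exists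
      exact ⟨K, h2, h1⟩
    set L : ℝ := 1 / (r - 1) + (1 / r) ^ K * (2 / (r - 2)) with hL
    set c : ℕ → ℝ := fun m => ((2 * m : ℝ) - 1) / ((2 * m : ℝ) - K) with hcdef
    have hinv : Tendsto (fun m : ℕ => (2 * (m : ℝ))⁻¹) atTop (𝓝 0) := by
      apply Tendsto.inv_tendsto_atTop
      exact (tendsto_natCast_atTop_atTop).const_mul_atTop (by norm_num)
    have hctend : Tendsto c atTop (𝓝 1) := by
      have h1 : Tendsto (fun m : ℕ => 1 - (2 * (m : ℝ))⁻¹) atTop (𝓝 1) := by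
        simpa using tendsto_const_nhds.sub hinv
      have h2 : Tendsto (fun m : ℕ => 1 - (K : ℝ) * (2 * (m : ℝ))⁻¹) atTop (𝓝 1) := by
        simpa using tendsto_const_nhds.sub (hinv.const_mul (K : ℝ))
      have hA : Tendsto
          (fun m : ℕ => (1 - (2 * (m : ℝ))⁻¹) / (1 - (K : ℝ) * (2 * (m : ℝ))⁻¹))
          atTop (𝓝 1) := by
        have := h1.div h2 (by norm_num); rw [div_one] at this; exact this
      apply hA.congr'
      filter_upwards [eventually_ge_atTop (K + 1)] with m hm
      have hm1 : 1 ≤ m := by omega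
      have hmr : (1:ℝ) ≤ m := by exact_mod_cast hm1
      have hKr : (K:ℝ) + 1 ≤ m := by exact_mod_cast hm
      have h2m0 : (2 * (m:ℝ)) ≠ 0 := by positivity
      have hd : (2 * (m:ℝ)) - K ≠ 0 := by
        have : (0:ℝ) < 2 * (m:ℝ) - K := by linarith
        linarith
      simp only [hcdef]
      field_simp
    have hLlt : L < 1 / (r - 1) + ε := by
      rw [hL]; linarith
    have hLtend : Tendsto (fun m => (c m) ^ K * L) atTop (𝓝 ((1:ℝ) ^ K * L)) :=
      (hctend.pow K).mul_const L
    have hev : ∀ᶠ m in atTop, (c m) ^ K * L < 1 / (r - 1) + ε :=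
      hLtend.eventually_lt_const (show (1:ℝ) ^ K * L < 1 / (r - 1) + ε by simpa using hLlt)
    filter_upwards [hev, eventually_ge_atTop (K + 1)] with m hmev hm
    -- setup
    have hm1 : 1 ≤ m := by omega
    have hKm : K ≤ m := by omega
    have hKN : K ≤ 2 * m - 1 := by omega
    have hmr : (1:ℝ) ≤ m := by exact_mod_cast hm1
    have hKr : (K:ℝ) ≤ m := by exact_mod_cast hKm
    have hcm : (0:ℝ) < 2 * m - K := by linarith
    have hnum : (0:ℝ) ≤ 2 * m - 1 := by linarith
    have hcval : c m = ((2 * m : ℝ) - 1) / ((2 * m : ℝ) - K) := rfl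
    have hc1 : 1 ≤ c m := by
      rw [hcval, le_div_iff₀ hcm]
      have : (1:ℝ) ≤ K := by exact_mod_cast hK1
      linarith
    have hc0 : (0:ℝ) ≤ c m / r := by
      have : (0:ℝ) ≤ c m := by linarith
      positivity
    -- pointwise γ bounds
    have hγnn : ∀ k : ℕ, 1 ≤ k → k ≤ 2 * m - 1 → 0 ≤ γ m k :=
      fun k h1 h2 => (hγpos m k h1 h2).le
    have hb2 : ∀ k : ℕ, 1 ≤ k → k ≤ 2 * m - 1 → γ m k ≤ 2 / r := by
      intro k hk1 hk2
      rcases le_or_gt k m with hkm | hkm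
      · have h := hγ1 m k hk1 hkm
        have hkr : (k:ℝ) ≤ m := by exact_mod_cast hkm
        have hd : (0:ℝ) < 2 * m - k := by linarith
        calc γ m k ≤ (1 / r) * ((2 * m : ℝ) - 1) / ((2 * m : ℝ) - k) := h
          _ = ((2 * m : ℝ) - 1) / ((2 * m : ℝ) - k) * (1 / r) := by ring
          _ ≤ 2 * (1 / r) := by
              apply mul_le_mul_of_nonneg_right _ hx0
              rw [div_le_iff₀ hd]; linarith
          _ = 2 / r := by ring
      · have hk2' : m + 1 ≤ k := hkm
        have h := hγ2 m k hk2' hk2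
        have hkr : (m:ℝ) + 1 ≤ k := by exact_mod_cast hk2'
        have hd : (0:ℝ) < (k:ℝ) := by linarith
        rw [h]
        calc (1 / r) * ((2 * m : ℝ) - 1) / (k : ℝ)
            = ((2 * m : ℝ) - 1) / (k : ℝ) * (1 / r) := by ring
          _ ≤ 2 * (1 / r) := by
              apply mul_le_mul_of_nonneg_right _ hx0
              rw [div_le_iff₀ hd]; linarith
          _ = 2 / r := by ring
    have hbc : ∀ k : ℕ, 1 ≤ k → k ≤ K → γ m k ≤ c m / r := by
      intro k hk1 hkK
      have h := hγ1 m k hk1 (hkK.trans hKm)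
      have hkr : (k:ℝ) ≤ K := by exact_mod_cast hkK
      calc γ m k ≤ (1 / r) * ((2 * m : ℝ) - 1) / ((2 * m : ℝ) - k) := h
        _ = ((2 * m : ℝ) - 1) / ((2 * m : ℝ) - k) * (1 / r) := by ring
        _ ≤ ((2 * m : ℝ) - 1) / ((2 * m : ℝ) - K) * (1 / r) := by
            apply mul_le_mul_of_nonneg_right _ hx0
            have hdk : (0:ℝ) < 2 * (m:ℝ) - k := by linarith
            rw [div_le_div_iff₀ hdk hcm]
            have hle : (2 * (m:ℝ)) - K ≤ (2 * (m:ℝ)) - k := by linarith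
            exact mul_le_mul_of_nonneg_left hle hnum
        _ = c m / r := by rw [hcval]; ring
    -- product bounds
    have hPK : ∀ j : ℕ, j ≤ K → ∏ k ∈ Finset.Icc 1 j, γ m k ≤ (c m / r) ^ j := by
      intro j hj
      have h : ∏ k ∈ Finset.Icc 1 j, γ m k ≤ ∏ _k ∈ Finset.Icc 1 j, (c m / r) := by
        apply Finset.prod_le_prod
        · intro k hk
          rw [Finset.mem_Icc] at hk
          exact hγnn k hk.1 (by omega)
        · intro k hk
          rw [Finset.mem_Icc] at hk
          exact hbc k hk.1 (hk.2.trans hj)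
      simpa [Finset.prod_const, Nat.card_Icc, div_pow] using h
    have hIoc : ∀ a : ℕ, Finset.Icc 1 a = Finset.Ioc 0 a := by
      intro a; rw [← Finset.Icc_add_one_left_eq_Ioc, zero_add]
    have hPbig : ∀ j : ℕ, K < j → j ≤ 2 * m - 1 →
        ∏ k ∈ Finset.Icc 1 j, γ m k ≤ (c m / r) ^ K * (2 / r) ^ (j - K) := by
      intro j hKj hjN
      have hsplit : (∏ k ∈ Finset.Ioc 0 K, γ m k) * ∏ k ∈ Finset.Ioc K j, γ m k
          = ∏ k ∈ Finset.Ioc 0 j, γ m k :=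
        Finset.prod_Ioc_consecutive _ (Nat.zero_le K) hKj.le
      rw [hIoc, ← hsplit]
      have h1 : ∏ k ∈ Finset.Ioc 0 K, γ m k ≤ (c m / r) ^ K := by
        rw [← hIoc]; exact hPK K le_rfl
      have h2 : ∏ k ∈ Finset.Ioc K j, γ m k ≤ (2 / r) ^ (j - K) := by
        have h : ∏ k ∈ Finset.Ioc K j, γ m k ≤ ∏ _k ∈ Finset.Ioc K j, (2 / r) := by
          apply Finset.prod_le_prod
          · intro k hk
            rw [Finset.mem_Ioc] at hk
            exact hγnn k (by omega) (by omega)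
          · intro k hk
            rw [Finset.mem_Ioc] at hk
            exact hb2 k (by omega) (by omega)
        simpa [Finset.prod_const, Nat.card_Ioc, div_pow] using h
      have hp1 : 0 ≤ ∏ k ∈ Finset.Ioc K j, γ m k := by
        apply Finset.prod_nonneg
        intro k hk
        rw [Finset.mem_Ioc] at hk
        exact hγnn k (by omega) (by omega)
      exact mul_le_mul h1 h2 hp1 (by positivity)
    -- sum bounds
    have hc0' : (0:ℝ) ≤ c m := by linarith
    have hsum1 : ∑ j ∈ Finset.Ioc 0 K, ∏ k ∈ Finset.Icc 1 j, γ m k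
        ≤ (c m) ^ K * (1 / (r - 1)) := by
      calc ∑ j ∈ Finset.Ioc 0 K, ∏ k ∈ Finset.Icc 1 j, γ m k
          ≤ ∑ j ∈ Finset.Ioc 0 K, (c m) ^ K * (1 / r) ^ j := by
            apply Finset.sum_le_sum
            intro j hj
            simp only [Finset.mem_Ioc] at hj
            calc ∏ k ∈ Finset.Icc 1 j, γ m k ≤ (c m / r) ^ j := hPK j hj.2
              _ = (c m) ^ j * (1 / r) ^ j := by
                  rw [div_eq_mul_one_div, mul_pow]
              _ ≤ (c m) ^ K * (1 / r) ^ j := by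
                  apply mul_le_mul_of_nonneg_right _ (by positivity)
                  exact pow_le_pow_right₀ hc1 hj.2
        _ = (c m) ^ K * ∑ j ∈ Finset.Ioc 0 K, (1 / r) ^ j := by
            rw [Finset.mul_sum]
        _ ≤ (c m) ^ K * (1 / (r - 1)) := by
            apply mul_le_mul_of_nonneg_left _ (by positivity)
            have hIco : Finset.Ioc 0 K = Finset.Ico 1 (K + 1) := by
              rw [← Finset.Icc_add_one_left_eq_Ioc, Finset.Ico_add_one_right_eq_Icc, zero_add]
            rw [hIco, Finset.sum_Ico_eq_sum_range]
            simp only [Nat.add_sub_cancel]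
            have he : ∀ i : ℕ, (1 / r : ℝ) ^ (1 + i) = (1 / r) * (1 / r) ^ i := by
              intro i; rw [pow_add, pow_one]
            rw [Finset.sum_congr rfl (fun i _ => he i), ← Finset.mul_sum]
            have hg := geom_bound hx0 hx1 K
            have heq : (1 / r : ℝ) * (1 - 1 / r)⁻¹ = 1 / (r - 1) := by
              have h2' : (1 - 1/r : ℝ) ≠ 0 := by linarith
              field_simp
            calc (1 / r : ℝ) * ∑ i ∈ Finset.range K, (1 / r) ^ i
                ≤ (1 / r) * (1 - 1 / r)⁻¹ := mul_le_mul_of_nonneg_left hg hx0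
              _ = 1 / (r - 1) := heq
    have hsum2 : ∑ j ∈ Finset.Ioc K (2 * m - 1), ∏ k ∈ Finset.Icc 1 j, γ m k
        ≤ (c m) ^ K * ((1 / r) ^ K * (2 / (r - 2))) := by
      calc ∑ j ∈ Finset.Ioc K (2 * m - 1), ∏ k ∈ Finset.Icc 1 j, γ m k
          ≤ ∑ j ∈ Finset.Ioc K (2 * m - 1), (c m / r) ^ K * (2 / r) ^ (j - K) := by
            apply Finset.sum_le_sum
            intro j hj
            simp only [Finset.mem_Ioc] at hj
            exact hPbig j hj.1 hj.2
        _ = (c m / r) ^ K * ∑ j ∈ Finset.Ioc K (2 * m - 1), (2 / r) ^ (j - K) := by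
            rw [Finset.mul_sum]
        _ ≤ (c m / r) ^ K * (2 / (r - 2)) := by
            apply mul_le_mul_of_nonneg_left _ (by positivity)
            have hIco : Finset.Ioc K (2 * m - 1) = Finset.Ico (K + 1) (2 * m - 1 + 1) := by
              rw [← Finset.Icc_add_one_left_eq_Ioc, Finset.Ico_add_one_right_eq_Icc]
            rw [hIco, Finset.sum_Ico_eq_sum_range]
            have he : ∀ i : ℕ, (2 / r : ℝ) ^ (K + 1 + i - K) = (2 / r) * (2 / r) ^ i := by
              intro i
              have hi : K + 1 + i - K = i + 1 := by omega
              rw [hi, pow_succ]; ring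
            rw [Finset.sum_congr rfl (fun i _ => he i), ← Finset.mul_sum]
            have hg := geom_bound hy0 hy1 (2 * m - 1 + 1 - (K + 1))
            have heq : (2 / r : ℝ) * (1 - 2 / r)⁻¹ = 2 / (r - 2) := by
              have h2' : (1 - 2/r : ℝ) ≠ 0 := by linarith
              field_simp
            calc (2 / r : ℝ) * ∑ i ∈ Finset.range (2 * m - 1 + 1 - (K + 1)), (2 / r) ^ i
                ≤ (2 / r) * (1 - 2 / r)⁻¹ := mul_le_mul_of_nonneg_left hg hy0
              _ = 2 / (r - 2) := heq
        _ = (c m) ^ K * ((1 / r) ^ K * (2 / (r - 2))) := by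
            rw [div_eq_mul_one_div, mul_pow]; ring
    have hSbound : ∑ j ∈ Finset.Icc 1 (2 * m - 1), ∏ k ∈ Finset.Icc 1 j, γ m k
        ≤ (c m) ^ K * L := by
      rw [hIoc, ← Finset.sum_Ioc_consecutive _ (Nat.zero_le K) hKN, hL]
      calc (∑ j ∈ Finset.Ioc 0 K, ∏ k ∈ Finset.Icc 1 j, γ m k)
            + ∑ j ∈ Finset.Ioc K (2 * m - 1), ∏ k ∈ Finset.Icc 1 j, γ m k
          ≤ (c m) ^ K * (1 / (r - 1)) + (c m) ^ K * ((1 / r) ^ K * (2 / (r - 2))) :=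
            add_le_add hsum1 hsum2
        _ = (c m) ^ K * (1 / (r - 1) + (1 / r) ^ K * (2 / (r - 2))) := by ring
    have hSlt : ∑ j ∈ Finset.Icc 1 (2 * m - 1), ∏ k ∈ Finset.Icc 1 j, γ m k
        < 1 / (r - 1) + ε := lt_of_le_of_lt hSbound hmev
    -- final arithmetic
    rw [hf m]
    exact arith_final hr hε (hSnn m) hSlt
  -- assemble liminf
  rw [ge_iff_le]
  apply le_of_forall_sub_le
  intro ε hε
  apply le_liminf_of_le
  · exact (isBoundedUnder_of ⟨1, fun m => hfle1 m⟩).isCoboundedUnder_ge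
  · filter_upwards [key ε hε] with m h
    linarith
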